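/- For any positive integer r, the Gauss sum of the quadratic form q(x₁,x₂) = (x₁² + x₁x₂ + x₂²)/2^r on (ℤ/2^rℤ)² equals (−1)^r. -/

import Mathlib

open Finset Complex

noncomputable def qzExp (x : AddCircle (1 : ℚ)) : ℂ :=
  Complex.exp (2 * Real.pi * Complex.I * ((Quotient.out x : ℚ) : ℂ))

noncomputable def gSum (G : Type*) [AddCommGroup G] (q : G → AddCircle (1 : ℚ)) : ℂ :=
  (1 / Real.sqrt (Nat.card G)) * ∑ᶠ x : G, qzExp (q x)

noncomputable def eS (r n : ℕ) : ℂ := Complex.exp (2 * Real.pi * Complex.I * n / 2 ^ r)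

lemma eS_add (r a b : ℕ) : eS r (a + b) = eS r a * eS r b := by
  rw [eS, eS, eS, ← Complex.exp_add]; congr 1; push_cast; ring

lemma eS_half (r k : ℕ) : eS (r + 1) (2 ^ r * k) = (-1 : ℂ) ^ k := by
  rw [eS, ← Complex.exp_pi_mul_I, ← Complex.exp_nat_mul]
  congr 1
  have h2 : (2 : ℂ) ^ (r + 1) = 2 * 2 ^ r := by rw [pow_succ]; ring
  have hne : (2 : ℂ) ^ r ≠ 0 := pow_ne_zero _ two_ne_zero
  rw [h2]; push_cast; field_simp

lemma eS_quad (r n : ℕ) : eS (r + 2) (4 * n) = eS r n := by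
  rw [eS, eS]
  congr 1
  have h2 : (2 : ℂ) ^ (r + 2) = 4 * 2 ^ r := by rw [pow_add]; ring
  have hne : (2 : ℂ) ^ r ≠ 0 := pow_ne_zero _ two_ne_zero
  rw [h2]; push_cast; field_simp

noncomputable def T (r : ℕ) : ℂ :=
  ∑ x ∈ Finset.range (2 ^ r), ∑ y ∈ Finset.range (2 ^ r), eS r (x ^ 2 + x * y + y ^ 2)

lemma evenpow (r : ℕ) : Even (2 ^ (r + 1)) :=
  Nat.even_pow.mpr ⟨even_two, by omega⟩

lemma neg_one_even {n : ℕ} (h : Even n) : (-1 : ℂ) ^ n = 1 := h.neg_one_pow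

lemma quadX (r x y : ℕ) :
    eS (r + 2) ((2 ^ (r + 1) + x) ^ 2 + (2 ^ (r + 1) + x) * y + y ^ 2)
      = eS (r + 2) (x ^ 2 + x * y + y ^ 2) * (-1 : ℂ) ^ y := by
  have h : (2 ^ (r + 1) + x) ^ 2 + (2 ^ (r + 1) + x) * y + y ^ 2
      = (x ^ 2 + x * y + y ^ 2) + 2 ^ (r + 1) * (2 * x + y + 2 ^ (r + 1)) := by ring
  rw [h, eS_add, eS_half (r + 1)]
  congr 1
  rw [pow_add, pow_add, neg_one_even (even_two_mul x), neg_one_even (evenpow r)]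
  ring

lemma quadY (r x y : ℕ) :
    eS (r + 2) (x ^ 2 + x * (2 ^ (r + 1) + y) + (2 ^ (r + 1) + y) ^ 2)
      = eS (r + 2) (x ^ 2 + x * y + y ^ 2) * (-1 : ℂ) ^ x := by
  have h : x ^ 2 + x * (2 ^ (r + 1) + y) + (2 ^ (r + 1) + y) ^ 2
      = (x ^ 2 + x * y + y ^ 2) + 2 ^ (r + 1) * (x + 2 * y + 2 ^ (r + 1)) := by ring
  rw [h, eS_add, eS_half (r + 1)]
  congr 1
  rw [pow_add, pow_add, neg_one_even (even_two_mul y), neg_one_even (evenpow r)]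
  ring

lemma quadXY (r x y : ℕ) :
    eS (r + 2) ((2 ^ (r + 1) + x) ^ 2 + (2 ^ (r + 1) + x) * (2 ^ (r + 1) + y)
        + (2 ^ (r + 1) + y) ^ 2)
      = eS (r + 2) (x ^ 2 + x * y + y ^ 2) * ((-1 : ℂ) ^ x * (-1 : ℂ) ^ y) := by
  have h : (2 ^ (r + 1) + x) ^ 2 + (2 ^ (r + 1) + x) * (2 ^ (r + 1) + y) + (2 ^ (r + 1) + y) ^ 2
      = (x ^ 2 + x * y + y ^ 2) + 2 ^ (r + 1) * (3 * x + 3 * y + 3 * 2 ^ (r + 1)) := by ring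
  rw [h, eS_add, eS_half (r + 1)]
  congr 1
  have h3 : ∀ n : ℕ, (-1 : ℂ) ^ (3 * n) = (-1 : ℂ) ^ n := by
    intro n
    rw [show 3 * n = 2 * n + n by ring, pow_add, neg_one_even (even_two_mul n), one_mul]
  rw [pow_add, pow_add, h3, h3, h3, neg_one_even (evenpow r)]
  ring

lemma half_sum (f : ℕ → ℂ) (N : ℕ) :
    ∑ x ∈ Finset.range (2 * N), f x * (1 + (-1 : ℂ) ^ x) = 2 * ∑ a ∈ Finset.range N, f (2 * a) := by
  induction N with
  | zero => simp
  | succ n ih =>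
    have h : 2 * (n + 1) = 2 * n + 1 + 1 := by ring
    rw [h, Finset.sum_range_succ, Finset.sum_range_succ, ih, Finset.sum_range_succ]
    have he : ((-1 : ℂ)) ^ (2 * n) = 1 := by rw [pow_mul]; norm_num
    have ho : ((-1 : ℂ)) ^ (2 * n + 1) = -1 := by rw [pow_succ, he]; ring
    rw [he, ho]; ring

lemma T_rec (r : ℕ) : T (r + 2) = 4 * T r := by
  have hpow : 2 ^ (r + 2) = 2 ^ (r + 1) + 2 ^ (r + 1) := by rw [pow_succ]; ring
  have step1 : T (r + 2) = ∑ x ∈ range (2 ^ (r + 1)), ∑ y ∈ range (2 ^ (r + 1)),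
      (eS (r + 2) (x ^ 2 + x * y + y ^ 2) * (1 + (-1 : ℂ) ^ x)) * (1 + (-1 : ℂ) ^ y) := by
    rw [T, hpow]
    rw [Finset.sum_range_add (fun x => ∑ y ∈ Finset.range (2 ^ (r + 1) + 2 ^ (r + 1)),
      eS (r + 2) (x ^ 2 + x * y + y ^ 2)) (2 ^ (r + 1)) (2 ^ (r + 1))]
    rw [← Finset.sum_add_distrib]
    refine Finset.sum_congr rfl fun x _ => ?_
    rw [Finset.sum_range_add (fun y => eS (r + 2) (x ^ 2 + x * y + y ^ 2)),
      Finset.sum_range_add (fun y => eS (r + 2) ((2 ^ (r + 1) + x) ^ 2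
        + (2 ^ (r + 1) + x) * y + y ^ 2)),
      ]
    simp only [← Finset.sum_add_distrib]
    refine Finset.sum_congr rfl fun y _ => ?_
    rw [quadX, quadY, quadXY]
    ring
  have hM : 2 ^ (r + 1) = 2 * 2 ^ r := by rw [pow_succ]; ring
  rw [step1, hM]
  have step2 : ∀ x : ℕ, ∑ y ∈ range (2 * 2 ^ r),
      (eS (r + 2) (x ^ 2 + x * y + y ^ 2) * (1 + (-1 : ℂ) ^ x)) * (1 + (-1 : ℂ) ^ y)
      = (2 * ∑ b ∈ range (2 ^ r), eS (r + 2) (x ^ 2 + x * (2 * b) + (2 * b) ^ 2))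
          * (1 + (-1 : ℂ) ^ x) := by
    intro x
    rw [half_sum (fun y => eS (r + 2) (x ^ 2 + x * y + y ^ 2) * (1 + (-1 : ℂ) ^ x))]
    rw [← Finset.sum_mul]
    ring
  simp only [step2]
  rw [half_sum (fun x => 2 * ∑ b ∈ range (2 ^ r), eS (r + 2) (x ^ 2 + x * (2 * b) + (2 * b) ^ 2))]
  have step3 : ∀ a b : ℕ, eS (r + 2) ((2 * a) ^ 2 + (2 * a) * (2 * b) + (2 * b) ^ 2)
      = eS r (a ^ 2 + a * b + b ^ 2) := by
    intro a b
    have h : (2 * a) ^ 2 + (2 * a) * (2 * b) + (2 * b) ^ 2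
        = 4 * (a ^ 2 + a * b + b ^ 2) := by ring
    rw [h, eS_quad]
  simp only [step3]
  rw [T, ← Finset.mul_sum]
  ring

lemma T_zero : T 0 = 1 := by
  simp [T, eS]

lemma T_one : T 1 = -2 := by
  have h0 : eS 1 0 = 1 := by simp [eS]
  have h1 : eS 1 1 = -1 := by
    have := eS_half 0 1
    simpa using this
  have h3 : eS 1 3 = -1 := by
    have := eS_half 0 3
    norm_num at this
    simpa using this
  rw [T]
  norm_num [Finset.sum_range_succ, h0, h1, h3]

lemma T_eq (r : ℕ) : T r = (-2 : ℂ) ^ r := by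
  induction r using Nat.strong_induction_on with
  | _ r ih =>
    match r with
    | 0 => simpa using T_zero
    | 1 => rw [T_one]; norm_num
    | (n + 2) => rw [T_rec, ih n (by omega)]; ring

lemma qzExp_coe (a : ℚ) :
    qzExp ((a : AddCircle (1 : ℚ))) = Complex.exp (2 * Real.pi * Complex.I * (a : ℂ)) := by
  set b : ℚ := (Quotient.out ((a : AddCircle (1 : ℚ))) : ℚ) with hbdef
  have hb : (b : AddCircle (1 : ℚ)) = (a : AddCircle (1 : ℚ)) := Quotient.out_eq _
  have hz : ((b - a : ℚ) : AddCircle (1 : ℚ)) = 0 := by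
    have : ((b - a : ℚ) : AddCircle (1 : ℚ)) = (b : AddCircle (1 : ℚ)) - a := rfl
    rw [this, hb, sub_self]
  obtain ⟨n, hn⟩ := (AddCircle.coe_eq_zero_iff (1 : ℚ)).mp hz
  have hba : (b : ℂ) = (a : ℂ) + (n : ℂ) := by
    have : b = a + (n : ℚ) := by
      have := hn
      rw [zsmul_eq_mul, mul_one] at this
      linarith [this]
    rw [this]; push_cast; ring
  rw [qzExp, ← hbdef, hba, mul_add, Complex.exp_add,
    show 2 * (Real.pi : ℂ) * Complex.I * (n : ℂ) = (n : ℂ) * (2 * Real.pi * Complex.I) by ring,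
    Complex.exp_int_mul_two_pi_mul_I, mul_one]

lemma zmod_sum (n : ℕ) [NeZero n] (f : ℕ → ℂ) :
    ∑ x : ZMod n, f x.val = ∑ i ∈ Finset.range n, f i := by
  refine Finset.sum_nbij' (i := fun (x : ZMod n) => x.val) (j := fun i => (i : ZMod n))
    ?_ ?_ ?_ ?_ ?_
  · intro a _; exact Finset.mem_range.mpr (ZMod.val_lt a)
  · intro a _; exact Finset.mem_univ _
  · intro a _; exact ZMod.natCast_rightInverse a
  · intro i hi; exact ZMod.val_cast_of_lt (Finset.mem_range.mp hi)
  · intro a _; rfl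

/-- The Gauss sum of q(x₁,x₂) = (x₁² + x₁x₂ + x₂²)/2^r on (ℤ/2^rℤ)² is (−1)^r. -/
theorem stmt10 (r : ℕ) (hr : 0 < r)
    (q : ZMod (2 ^ r) × ZMod (2 ^ r) → AddCircle (1 : ℚ))
    (hq : ∀ x : ZMod (2 ^ r) × ZMod (2 ^ r),
      q x = ((((x.1.val : ℚ) ^ 2 + (x.1.val : ℚ) * (x.2.val : ℚ) + (x.2.val : ℚ) ^ 2) / 2 ^ r : ℚ) :
        AddCircle (1 : ℚ))) :
    gSum (ZMod (2 ^ r) × ZMod (2 ^ r)) q = (-1 : ℂ) ^ r := by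
  haveI : NeZero (2 ^ r) := ⟨pow_ne_zero r two_ne_zero⟩
  have hne : (2 : ℂ) ^ r ≠ 0 := pow_ne_zero _ two_ne_zero
  rw [gSum, finsum_eq_sum_of_fintype]
  have hterm : ∀ x : ZMod (2 ^ r) × ZMod (2 ^ r),
      qzExp (q x) = eS r (x.1.val ^ 2 + x.1.val * x.2.val + x.2.val ^ 2) := by
    intro x
    rw [hq x, qzExp_coe, eS]
    congr 1
    push_cast
    field_simp
  simp only [hterm]
  rw [Fintype.sum_prod_type]
  have hx : ∀ x : ZMod (2 ^ r),
      ∑ y : ZMod (2 ^ r), eS r (x.val ^ 2 + x.val * y.val + y.val ^ 2)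
        = ∑ j ∈ range (2 ^ r), eS r (x.val ^ 2 + x.val * j + j ^ 2) := fun x =>
    zmod_sum (2 ^ r) (fun j => eS r (x.val ^ 2 + x.val * j + j ^ 2))
  simp only [hx]
  rw [zmod_sum (2 ^ r) (fun i => ∑ j ∈ range (2 ^ r), eS r (i ^ 2 + i * j + j ^ 2))]
  have hT := T_eq r
  rw [T] at hT
  rw [hT]
  have hcard : Nat.card (ZMod (2 ^ r) × ZMod (2 ^ r)) = 2 ^ r * 2 ^ r := by
    simp [Nat.card_eq_fintype_card, ZMod.card]
  have hsqrt : Real.sqrt (Nat.card (ZMod (2 ^ r) × ZMod (2 ^ r))) = 2 ^ r := by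
    rw [hcard]; push_cast
    exact Real.sqrt_mul_self (by positivity)
  rw [hsqrt]
  rw [neg_pow]
  push_cast
  field_simp
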